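/- Let g ≥ 2 and m ≥ 1 be integers with m ≤ 4(g − 1), and let r₁,…,r_{m+1} be integers with each r_i ≥ 2. Then 2 + (1 − (1/m)∑_{i=1}^{m} 1/r_i²) / ((2g − 2)/m + 1 − (1/m)∑_{i=1}^{m} 1/r_i) < 2 + (1 − (1/(m+1))∑_{i=1}^{m+1} 1/r_i²) / ((2g − 2)/(m+1) + 1 − (1/(m+1))∑_{i=1}^{m+1} 1/r_i); that is, the abstract slope strictly increases when the (m+1)-st component is added. -/
import Mathlib


/-- For `g ≥ 2`, `1 ≤ m ≤ 4(g-1)` and integers `r₁,…,r_{m+1} ≥ 2`, the abstract slope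
strictly increases when the `(m+1)`-st component is added. -/
theorem abstract_slope_strict_mono (g m : ℕ) (hg : 2 ≤ g) (hm : 1 ≤ m)
    (hm4 : m ≤ 4 * (g - 1)) (r : Fin (m + 1) → ℕ) (hr : ∀ i, 2 ≤ r i) :
    2 + (1 - (1 / (m : ℚ)) * ∑ i : Fin m, 1 / (r i.castSucc : ℚ) ^ 2) /
        ((2 * (g : ℚ) - 2) / m + 1 - (1 / (m : ℚ)) * ∑ i : Fin m, 1 / (r i.castSucc : ℚ)) <
    2 + (1 - (1 / ((m : ℚ) + 1)) * ∑ i, 1 / (r i : ℚ) ^ 2) /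
        ((2 * (g : ℚ) - 2) / ((m : ℚ) + 1) + 1 - (1 / ((m : ℚ) + 1)) * ∑ i, 1 / (r i : ℚ)) := by
  have hm' : (1:ℚ) ≤ m := by exact_mod_cast hm
  have hmpos : (0:ℚ) < m := by linarith
  have hri : ∀ i, (2:ℚ) ≤ (r i : ℚ) := fun i => by exact_mod_cast hr i
  have hrpos : ∀ i, (0:ℚ) < (r i : ℚ) := fun i => by linarith [hri i]
  have hx2 : ∀ i, 1 / (r i : ℚ) ≤ 1/2 := fun i =>
    one_div_le_one_div_of_le (by norm_num) (hri i)
  have hx0 : ∀ i, (0:ℚ) < 1 / (r i : ℚ) := fun i => one_div_pos.mpr (hrpos i)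
  have hxsq : ∀ i, 1 / (r i : ℚ) ^ 2 ≤ 1 / (r i : ℚ) := fun i => by
    have h0 := hx0 i; have h2 := hx2 i
    have : (1 / (r i : ℚ)) ^ 2 ≤ 1 / (r i : ℚ) := by nlinarith
    calc 1 / (r i : ℚ) ^ 2 = (1 / (r i : ℚ)) ^ 2 := by rw [div_pow, one_pow]
    _ ≤ 1 / (r i : ℚ) := this
  have hx14 : ∀ i, 1 / (r i : ℚ) - 1 / (r i : ℚ) ^ 2 ≤ 1/4 := fun i => by
    have h0 := hx0 i
    have hsq : 1 / (r i : ℚ) ^ 2 = (1 / (r i : ℚ)) ^ 2 := by rw [div_pow, one_pow]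
    rw [hsq]
    nlinarith [sq_nonneg (1 / (r i : ℚ) - 1/2)]
  set a : ℚ := 2 * (g : ℚ) - 2 with ha
  have ha2 : (2:ℚ) ≤ a := by
    have : (2:ℚ) ≤ g := by exact_mod_cast hg
    simp only [ha]; linarith
  have hma : (m:ℚ) ≤ 2 * a := by
    have hg1 : (1:ℕ) ≤ g := le_trans (by norm_num) hg
    have h1 : (m:ℚ) ≤ 4 * ((g:ℚ) - 1) := by
      have := hm4
      have h2 : (m:ℚ) ≤ ((4 * (g - 1) : ℕ) : ℚ) := by exact_mod_cast this
      rwa [Nat.cast_mul, Nat.cast_sub hg1] at h2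
    simp only [ha]; linarith
  set S := ∑ i : Fin m, 1 / (r i.castSucc : ℚ) with hS
  set Q := ∑ i : Fin m, 1 / (r i.castSucc : ℚ) ^ 2 with hQ
  have hS0 : 0 ≤ S := Finset.sum_nonneg fun i _ => le_of_lt (hx0 i.castSucc)
  have hSm : S ≤ m / 2 := by
    calc S ≤ ∑ _i : Fin m, (1:ℚ)/2 := Finset.sum_le_sum fun i _ => hx2 i.castSucc
    _ = m / 2 := by simp [Finset.sum_const]; ring
  have hQ0 : 0 ≤ Q := Finset.sum_nonneg fun i _ => by positivity
  have hSQ : S - Q ≤ m / 4 := by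
    rw [hS, hQ, ← Finset.sum_sub_distrib]
    calc (∑ i : Fin m, (1 / (r i.castSucc : ℚ) - 1 / (r i.castSucc : ℚ) ^ 2))
        ≤ ∑ _i : Fin m, (1:ℚ)/4 := Finset.sum_le_sum fun i _ => hx14 i.castSucc
    _ = m / 4 := by simp [Finset.sum_const]; ring
  have hQS : Q ≤ S := by
    rw [hS, hQ]; exact Finset.sum_le_sum fun i _ => hxsq i.castSucc
  rw [Fin.sum_univ_castSucc (f := fun i => 1 / (r i : ℚ) ^ 2),
      Fin.sum_univ_castSucc (f := fun i => 1 / (r i : ℚ))]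
  set s := 1 / (r (Fin.last m) : ℚ) with hs
  set q := 1 / (r (Fin.last m) : ℚ) ^ 2 with hq
  have hqs : q = s ^ 2 := by rw [hq, hs, div_pow, one_pow]
  have hs0 : 0 < s := hx0 _
  have hs2 : s ≤ 1/2 := hx2 _
  have dd1 : (0:ℚ) < a + m - S := by linarith
  have dd2 : (0:ℚ) < a + (m + 1) - (S + s) := by linarith
  have ed1 : a / m + 1 - (1/m) * S = (a + m - S) / m := by field_simp
  have d1 : (0:ℚ) < a / m + 1 - (1/m) * S := by rw [ed1]; exact div_pos dd1 hmpos
  have hm1 : (0:ℚ) < (m:ℚ) + 1 := by linarith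
  have ed2 : a / ((m:ℚ)+1) + 1 - (1/((m:ℚ)+1)) * (S + s) = (a + (m + 1) - (S + s)) / ((m:ℚ)+1) := by
    field_simp
  have d2 : (0:ℚ) < a / ((m:ℚ)+1) + 1 - (1/((m:ℚ)+1)) * (S + s) := by
    rw [ed2]; exact div_pos dd2 hm1
  have e1 : (1 - (1/m) * Q) / (a / m + 1 - (1/m) * S) = (m - Q) / (a + m - S) := by
    rw [div_eq_div_iff (ne_of_gt d1) (ne_of_gt dd1)]
    field_simp
  have e2 : (1 - (1/((m:ℚ)+1)) * (Q + q)) / (a / ((m:ℚ)+1) + 1 - (1/((m:ℚ)+1)) * (S + s))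
      = ((m:ℚ) + 1 - (Q + q)) / (a + (m + 1) - (S + s)) := by
    rw [div_eq_div_iff (ne_of_gt d2) (ne_of_gt dd2)]
    field_simp
  rw [e1, e2]
  have key : (m - Q) / (a + m - S) < ((m:ℚ) + 1 - (Q + q)) / (a + (m + 1) - (S + s)) := by
    rw [div_lt_div_iff₀ dd1 dd2, hqs]
    nlinarith [mul_pos (show (0:ℚ) < 1 - s by linarith) (show (0:ℚ) < a - (S - Q) by linarith),
      mul_pos (mul_pos hs0 (show (0:ℚ) < 1 - s by linarith)) dd1]
  linarith
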